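/- Let R, S be real symmetric n×n matrices with S invertible. The number of real negative eigenvalues k_r, the number of eigenvalues with positive imaginary part k_c, and the total negative Krein index k_i⁻ of the positive real eigenvalues of the pencil (R - zS), all counted with appropriate multiplicity, satisfy k_r + 2k_c + 2k_i⁻ ≤ 2n, where eigenvalues are counted for the generalized eigenvalue problem Ru = zSu. -/

import Mathlib

open Matrix Polynomial

/-- The complexification of a real matrix. -/
def cmplx {n : ℕ} (A : Matrix (Fin n) (Fin n) ℝ) : Matrix (Fin n) (Fin n) ℂ :=
  A.map (fun x => (x : ℂ))

/-- The (real) eigenspace `E_z = ker (R - z S)` of the pencil `R - z S`. -/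
noncomputable def pencilEigSp {n : ℕ} (R S : Matrix (Fin n) (Fin n) ℝ) (z : ℝ) :
    Submodule ℝ (Fin n → ℝ) :=
  LinearMap.ker (Matrix.toLin' (R - z • S))

/-- The negative Krein index `k_i⁻(z)` of a real eigenvalue `z` of the pencil `R - z S`:
the maximal dimension of a subspace of the eigenspace `E_z` on which the quadratic form
`u ↦ ⟨u, R u⟩` is negative definite (this equals the number of negative eigenvalues of
the Gram matrix `(⟨z_i, R z_j⟩)` for any basis of `E_z`). -/
noncomputable def kiNeg {n : ℕ} (R S : Matrix (Fin n) (Fin n) ℝ) (z : ℝ) : ℕ :=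
  sSup {d : ℕ | ∃ W : Submodule ℝ (Fin n → ℝ), W ≤ pencilEigSp R S z ∧
    Module.finrank ℝ W = d ∧ ∀ u ∈ W, u ≠ 0 → u ⬝ᵥ R.mulVec u < 0}

/-- The negative Krein index is bounded by the dimension of the eigenspace. -/
lemma aux_kiNeg_le {n : ℕ} (R S : Matrix (Fin n) (Fin n) ℝ) (z : ℝ) :
    kiNeg R S z ≤ Module.finrank ℝ (pencilEigSp R S z) := by
  apply csSup_le
  · exact ⟨0, ⊥, bot_le, by simp, by simp⟩
  · rintro d ⟨W, hW, rfl, -⟩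
    exact Submodule.finrank_mono hW

/-- The pencil eigenspace is the eigenspace of `S⁻¹ R`. -/
lemma aux_pencil_eig {n : ℕ} (R S : Matrix (Fin n) (Fin n) ℝ) (hSinv : IsUnit S.det) (z : ℝ) :
    pencilEigSp R S z = Module.End.eigenspace (Matrix.toLin' (S⁻¹ * R)) z := by
  ext u
  rw [pencilEigSp, LinearMap.mem_ker, Module.End.mem_eigenspace_iff]
  rw [Matrix.toLin'_apply, Matrix.toLin'_apply, Matrix.sub_mulVec, Matrix.smul_mulVec,
    sub_eq_zero]
  constructor
  · intro h
    rw [← Matrix.mulVec_mulVec, h, Matrix.mulVec_smul, Matrix.mulVec_mulVec,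
      Matrix.nonsing_inv_mul S hSinv, Matrix.one_mulVec]
  · intro h
    have := congrArg (fun v => S *ᵥ v) h
    simp only [Matrix.mulVec_mulVec, Matrix.mulVec_smul] at this
    rw [← Matrix.mul_assoc, Matrix.mul_nonsing_inv S hSinv, Matrix.one_mul] at this
    exact this

/-- Degree bound for determinants of matrices of polynomials of degree at most 1. -/
lemma aux_natDegree_det_le {n : ℕ} (M : Matrix (Fin n) (Fin n) (Polynomial ℂ))
    (h : ∀ i j, (M i j).natDegree ≤ 1) : M.det.natDegree ≤ n := by
  rw [Matrix.det_apply]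
  apply Polynomial.natDegree_sum_le_of_forall_le
  intro σ _
  rw [Units.smul_def, zsmul_eq_mul]
  refine (Polynomial.natDegree_mul_le).trans ?_
  rw [Polynomial.natDegree_intCast, zero_add]
  refine (Polynomial.natDegree_prod_le _ _).trans ?_
  calc ∑ i, (M (σ i) i).natDegree ≤ ∑ _i : Fin n, 1 :=
        Finset.sum_le_sum (fun i _ => h _ _)
    _ = n := by simp

/-- Charpoly of a shifted matrix is the composition with `X + C t`. -/
lemma aux_charpoly_shift {n : ℕ} (A : Matrix (Fin n) (Fin n) ℝ) (t : ℝ) :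
    (A - t • 1).charpoly = A.charpoly.comp (X + C t) := by
  have hcomp : A.charpoly.comp (X + C t) = aeval (X + C t) A.charpoly := by
    rw [Polynomial.aeval_def, Polynomial.eval₂_eq_eval_map]
    simp [Polynomial.comp, Polynomial.eval₂_eq_eval_map]
  rw [hcomp, Matrix.charpoly, Matrix.charpoly, AlgHom.map_det]
  congr 1
  ext i j
  by_cases h : i = j
  · subst h
    simp [Matrix.charmatrix_apply_eq, Matrix.sub_apply, Matrix.smul_apply, Matrix.one_apply]
    ring
  · simp [Matrix.charmatrix_apply_ne _ _ _ h, Matrix.sub_apply, Matrix.smul_apply,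
      Matrix.one_apply_ne h]

lemma aux_charpoly_toLin' {n : ℕ} (A : Matrix (Fin n) (Fin n) ℝ) :
    (Matrix.toLin' A).charpoly = A.charpoly := by
  rw [← LinearMap.charpoly_toMatrix (Matrix.toLin' A) (Pi.basisFun ℝ (Fin n)),
    LinearMap.toMatrix_eq_toMatrix', LinearMap.toMatrix'_toLin']

/-- Geometric multiplicity is at most algebraic multiplicity. -/
lemma aux_eig_le_mult {n : ℕ} (A : Matrix (Fin n) (Fin n) ℝ) (t : ℝ) :
    Module.finrank ℝ (Module.End.eigenspace (Matrix.toLin' A) t) ≤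
      (A.charpoly).rootMultiplicity t := by
  set φ : Module.End ℝ (Fin n → ℝ) := Matrix.toLin' A
  have h1 : Module.End.eigenspace φ t ≤ Module.End.maxGenEigenspace (φ - t • 1) 0 := by
    intro u hu
    rw [Module.End.mem_eigenspace_iff] at hu
    rw [Module.End.mem_maxGenEigenspace]
    refine ⟨1, ?_⟩
    simp [pow_one, hu, sub_eq_zero]
  have h2 : Module.finrank ℝ (Module.End.eigenspace φ t) ≤
      Module.finrank ℝ (Module.End.maxGenEigenspace (φ - t • 1) 0) :=
    Submodule.finrank_mono h1
  refine h2.trans ?_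
  rw [LinearMap.finrank_maxGenEigenspace_zero_eq]
  have h3 : φ - t • 1 = Matrix.toLin' (A - t • 1) := by
    rw [map_sub, _root_.map_smul, Matrix.toLin'_one]; rfl
  rw [h3, aux_charpoly_toLin', aux_charpoly_shift,
    ← Polynomial.rootMultiplicity_eq_natTrailingDegree]

/-- Factorization of the pencil determinant through the characteristic polynomial. -/
lemma aux_p_eq {n : ℕ} (Rm Sm : Matrix (Fin n) (Fin n) ℝ) (hSinv : IsUnit Sm.det) :
    Matrix.det (Rm.map (C : ℝ → Polynomial ℝ) -
        (X : Polynomial ℝ) • Sm.map (C : ℝ → Polynomial ℝ))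
      = (-1)^n * C Sm.det * (Sm⁻¹ * Rm).charpoly := by
  have hSA : Sm * (Sm⁻¹ * Rm) = Rm := by
    rw [← Matrix.mul_assoc, Matrix.mul_nonsing_inv _ hSinv, Matrix.one_mul]
  have hcomm : Sm.map (C : ℝ → Polynomial ℝ) * Matrix.scalar (Fin n) X
      = Matrix.scalar (Fin n) X * Sm.map C :=
    (Matrix.scalar_commute X (fun r' => Commute.all X r') (Sm.map C)).symm
  have hfac : Rm.map (C : ℝ → Polynomial ℝ) - (X : Polynomial ℝ) • Sm.map C
      = -(Sm.map C * Matrix.charmatrix (Sm⁻¹ * Rm)) := by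
    rw [Matrix.charmatrix, Matrix.mul_sub, RingHom.mapMatrix_apply, ← Matrix.map_mul, hSA,
      hcomm, Matrix.scalar_apply, ← Matrix.smul_eq_diagonal_mul, neg_sub]
  rw [hfac, Matrix.det_neg, Matrix.det_mul, ← Matrix.charpoly]
  have hdetS : (Sm.map (C : ℝ → Polynomial ℝ)).det = C Sm.det :=
    (RingHom.map_det (C : ℝ →+* Polynomial ℝ) Sm).symm
  rw [hdetS]
  simp [Fintype.card_fin]
  ring

/-- for `R, S` real symmetric with `S` invertible and `det (R - z S)` not
identically zero, the counts `k_r` (negative real eigenvalues with multiplicity), `k_c`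
(eigenvalues with positive imaginary part with multiplicity), and `k_i⁻` (total negative
Krein index of the positive real eigenvalues) of the pencil `R - z S` satisfy
`k_r + 2 k_c + 2 k_i⁻ ≤ 2 n`. -/
theorem pencil_index_bound (n : ℕ) (R S : Matrix (Fin n) (Fin n) ℝ)
    (hR : Rᵀ = R) (hS : Sᵀ = S) (hSinv : IsUnit S.det)
    (p : Polynomial ℝ)
    (hp : p = Matrix.det (R.map (C : ℝ → Polynomial ℝ) -
      (X : Polynomial ℝ) • S.map (C : ℝ → Polynomial ℝ)))
    (hp0 : p ≠ 0)
    (pC : Polynomial ℂ)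
    (hpC : pC = Matrix.det ((cmplx R).map (C : ℂ → Polynomial ℂ) -
      (X : Polynomial ℂ) • (cmplx S).map (C : ℂ → Polynomial ℂ))) :
    Multiset.card (p.roots.filter (fun t => t < 0)) +
      2 * Multiset.card (pC.roots.filter (fun ζ => 0 < ζ.im)) +
      2 * ∑ t ∈ p.roots.toFinset.filter (fun t => 0 < t), kiNeg R S t ≤ 2 * n := by
  classical
  -- pC is the complexification of p
  have hmap : pC = p.map (algebraMap ℝ ℂ) := by
    rw [hp, hpC, ← Polynomial.coe_mapRingHom, RingHom.map_det]
    congr 1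
    ext i j
    simp [cmplx, Matrix.map_apply, Matrix.sub_apply, Matrix.smul_apply, smul_eq_mul,
      Polynomial.map_sub, Polynomial.map_mul, Polynomial.map_C, Polynomial.map_X]
  -- degree bound
  have hdeg : pC.natDegree ≤ n := by
    rw [hpC]
    apply aux_natDegree_det_le
    intro i j
    simp only [Matrix.sub_apply, Matrix.smul_apply, Matrix.map_apply, smul_eq_mul]
    refine (Polynomial.natDegree_sub_le _ _).trans ?_
    exact max_le (by simp) ((Polynomial.natDegree_mul_le).trans (by simp))
  -- Part B : k_r + 2 k_c + k_p ≤ n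
  have partB : Multiset.card (p.roots.filter (fun t => t < 0)) +
      2 * Multiset.card (pC.roots.filter (fun ζ => 0 < ζ.im)) +
      Multiset.card (p.roots.filter (fun t => 0 < t)) ≤ n := by
    have hpC0 : pC ≠ 0 := by rw [hmap]; exact Polynomial.map_ne_zero hp0
    have hconj : pC.roots.map (starRingEnd ℂ) = pC.roots := by
      have h1 : pC.map (starRingEnd ℂ) = pC := by
        rw [hmap, Polynomial.map_map]; congr 1; ext x : 1; simp [Complex.conj_ofReal]
      conv_rhs => rw [← h1]
      rw [(IsAlgClosed.splits pC).roots_map]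
    have hle : p.roots.map (algebraMap ℝ ℂ) ≤ pC.roots := by
      rw [hmap]; exact Polynomial.map_roots_le (by rw [← hmap]; exact hpC0)
    have hcard : Multiset.card pC.roots ≤ n := (Polynomial.card_roots' pC).trans hdeg
    set P1 : ℂ → Prop := fun z => z.im = 0 ∧ z.re < 0 with hP1
    set P4 : ℂ → Prop := fun z => z.im = 0 ∧ 0 < z.re with hP4
    have hkr : Multiset.card (p.roots.filter (fun t => t < 0)) ≤
        Multiset.card (pC.roots.filter P1) := by
      refine le_trans ?_ (Multiset.card_le_card (Multiset.filter_le_filter P1 hle))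
      rw [Multiset.filter_map, Multiset.card_map]
      apply le_of_eq
      congr 1
      refine Multiset.filter_congr (fun x _ => ?_)
      simp [P1, Function.comp]
    have hkp : Multiset.card (p.roots.filter (fun t => 0 < t)) ≤
        Multiset.card (pC.roots.filter P4) := by
      refine le_trans ?_ (Multiset.card_le_card (Multiset.filter_le_filter P4 hle))
      rw [Multiset.filter_map, Multiset.card_map]
      apply le_of_eq
      congr 1
      refine Multiset.filter_congr (fun x _ => ?_)
      simp [P4, Function.comp]
    have hkc : Multiset.card (pC.roots.filter (fun z => z.im < 0)) =
        Multiset.card (pC.roots.filter (fun z => 0 < z.im)) := by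
      conv_lhs => rw [← hconj]
      rw [Multiset.filter_map, Multiset.card_map]
      congr 1
      refine Multiset.filter_congr (fun x _ => ?_)
      simp [Function.comp]
    have key : ∀ (P Q : ℂ → Prop) [DecidablePred P] [DecidablePred Q], (∀ x, ¬ (P x ∧ Q x)) →
        Multiset.card (pC.roots.filter P) + Multiset.card (pC.roots.filter Q) =
        Multiset.card (pC.roots.filter (fun x => P x ∨ Q x)) := by
      intro P Q _ _ hPQ
      have h0 := Multiset.filter_add_filter P Q pC.roots
      have h2 : Multiset.filter (fun x => P x ∧ Q x) pC.roots = 0 :=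
        Multiset.filter_eq_nil.mpr (fun x _ => hPQ x)
      have := congrArg Multiset.card h0
      rw [Multiset.card_add, Multiset.card_add, h2] at this
      simpa using this
    have k12 := key P1 (fun z => 0 < z.im)
      (by rintro x ⟨⟨h1, _⟩, h2⟩; rw [h1] at h2; exact lt_irrefl 0 h2)
    have k123 := key (fun x => P1 x ∨ 0 < x.im) (fun z => z.im < 0)
      (by rintro x ⟨h1 | h1, h2⟩
          · rw [h1.1] at h2; exact lt_irrefl 0 h2
          · exact absurd (h1.trans h2) (lt_irrefl _))
    have k1234 := key (fun x => (P1 x ∨ 0 < x.im) ∨ x.im < 0) P4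
      (by rintro x ⟨(⟨h1, h1'⟩ | h1) | h1, h2, h2'⟩
          · exact absurd (h1'.trans h2') (lt_irrefl _)
          · rw [h2] at h1; exact lt_irrefl 0 h1
          · rw [h2] at h1; exact lt_irrefl 0 h1)
    have hfin : Multiset.card (pC.roots.filter
        (fun x => ((P1 x ∨ 0 < x.im) ∨ x.im < 0) ∨ P4 x)) ≤ n :=
      (Multiset.card_le_card (Multiset.filter_le _ _)).trans hcard
    beta_reduce at k12 k123 k1234 hfin
    omega
  -- Part C : total Krein index is at most the number of positive roots with multiplicity
  have partC : ∑ t ∈ p.roots.toFinset.filter (fun t => 0 < t), kiNeg R S t ≤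
      Multiset.card (p.roots.filter (fun t => 0 < t)) := by
    have hmult : ∀ t : ℝ, kiNeg R S t ≤ p.rootMultiplicity t := by
      intro t
      refine (aux_kiNeg_le R S t).trans ?_
      rw [aux_pencil_eig R S hSinv t]
      refine (aux_eig_le_mult (S⁻¹ * R) t).trans ?_
      apply le_of_eq
      have hpfac : p = (-1)^n * C S.det * (S⁻¹ * R).charpoly := by
        rw [hp, aux_p_eq R S hSinv]
      have hc0 : ((-1 : Polynomial ℝ)^n * C S.det) ≠ 0 := by
        intro h
        apply hp0
        rw [hpfac, h, zero_mul]
      rw [hpfac]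
      rw [Polynomial.rootMultiplicity_mul (by rw [← hpfac]; exact hp0)]
      have : Polynomial.rootMultiplicity t ((-1 : Polynomial ℝ)^n * C S.det) = 0 := by
        apply Polynomial.rootMultiplicity_eq_zero
        intro h
        simp only [Polynomial.IsRoot, Polynomial.eval_mul, Polynomial.eval_pow,
          Polynomial.eval_neg, Polynomial.eval_one, Polynomial.eval_C] at h
        rcases mul_eq_zero.mp h with h' | h'
        · exact absurd h' (pow_ne_zero n (by norm_num))
        · exact hSinv.ne_zero h'
      omega
    calc ∑ t ∈ p.roots.toFinset.filter (fun t => 0 < t), kiNeg R S t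
        ≤ ∑ t ∈ p.roots.toFinset.filter (fun t => 0 < t), p.rootMultiplicity t :=
          Finset.sum_le_sum (fun t _ => hmult t)
      _ = ∑ t ∈ p.roots.toFinset.filter (fun t => 0 < t),
            (p.roots.filter (fun t => 0 < t)).count t := by
          refine Finset.sum_congr rfl (fun t ht => ?_)
          rw [Multiset.count_filter_of_pos (Finset.mem_filter.mp ht).2, Polynomial.count_roots]
      _ = Multiset.card (p.roots.filter (fun t => 0 < t)) := by
          rw [← Multiset.toFinset_sum_count_eq (p.roots.filter (fun t => 0 < t))]
          congr 1
          rw [Multiset.toFinset_filter]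
  omega
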